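/- If a triangle in the Euclidean plane has two congruent interior angle bisectors (each measured from the vertex to the point where the bisector meets the opposite side), then the triangle is isosceles (the Steiner–Lehmus theorem). -/

import Mathlib

open EuclideanGeometry

section SteinerLehmusAux

open Real

/-- Product-to-sum formula. -/
private lemma ptsum (X Y : ℝ) :
    Real.sin X * Real.sin Y = (Real.cos (X - Y) - Real.cos (X + Y)) / 2 := by
  rw [Real.cos_sub, Real.cos_add]; ring

private lemma trig_identity (S U : ℝ) :
    Real.sin (2*S+2*U) * Real.sin (3*S-U) - Real.sin (2*S-2*U) * Real.sin (3*S+U)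
      = Real.sin S * Real.sin (3*U) + Real.sin (5*S) * Real.sin U := by
  rw [ptsum (2*S+2*U), ptsum (2*S-2*U), ptsum S, ptsum (5*S),
    show (2*S+2*U) - (3*S-U) = -(S-3*U) by ring,
    show (2*S+2*U) + (3*S-U) = 5*S+U by ring,
    show (2*S-2*U) - (3*S+U) = -(S+3*U) by ring,
    show (2*S-2*U) + (3*S+U) = 5*S-U by ring,
    Real.cos_neg, Real.cos_neg]
  ring

private lemma pos_aux {S U : ℝ} (hS4 : S < π/4) (hU0 : 0 < U) (hUS : U < S) :
    0 < Real.sin S * Real.sin (3*U) + Real.sin (5*S) * Real.sin U := by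
  have hS0 : 0 < S := hU0.trans hUS
  have hpi := Real.pi_pos
  have hsinS : 0 < Real.sin S := Real.sin_pos_of_pos_of_lt_pi hS0 (by linarith)
  have hsinU : 0 < Real.sin U := Real.sin_pos_of_pos_of_lt_pi hU0 (by linarith)
  have hsin3U : 0 < Real.sin (3*U) := Real.sin_pos_of_pos_of_lt_pi (by linarith) (by linarith)
  have h3U : Real.sin U < Real.sin (3*U) := by
    have hid : Real.sin (3*U) - Real.sin U = 2 * Real.cos (2*U) * Real.sin U := by
      rw [show (3:ℝ)*U = 2*U + U by ring, Real.sin_add, Real.sin_two_mul, Real.cos_two_mul]; ring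
    have hcos : 0 < Real.cos (2*U) := Real.cos_pos_of_mem_Ioo ⟨by linarith, by linarith⟩
    nlinarith
  rcases le_or_gt 0 (Real.sin (5*S)) with h5 | h5
  · nlinarith
  · have h5π : π < 5*S := by
      by_contra hle
      have h55 : (0:ℝ) ≤ 5*S := by linarith
      have := Real.sin_nonneg_of_nonneg_of_le_pi h55 (not_lt.mp hle)
      linarith
    have hA : Real.sin (5*S - π) = - Real.sin (5*S) := Real.sin_sub_pi _
    have hApos : 0 < Real.sin (5*S - π) := Real.sin_pos_of_pos_of_lt_pi (by linarith) (by linarith)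
    have hlt : Real.sin (5*S - π) < Real.sin S :=
      Real.strictMonoOn_sin (Set.mem_Icc.mpr ⟨by linarith, by linarith⟩)
        (Set.mem_Icc.mpr ⟨by linarith, by linarith⟩) (by linarith)
    nlinarith [mul_pos (sub_pos.mpr hlt) hsin3U, mul_pos hApos (sub_pos.mpr h3U)]

private lemma key_trig {β γ : ℝ} (hβ : 0 < β) (hγ : 0 < γ) (hs : β + γ < π)
    (h : Real.sin β * Real.sin (β/2 + γ) = Real.sin γ * Real.sin (γ/2 + β)) : β = γ := by
  have hpi := Real.pi_pos
  set S := (β+γ)/4 with hS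
  set U := (β-γ)/4 with hU
  have hid := trig_identity S U
  rw [show 2*S+2*U = β by rw [hS, hU]; ring, show 2*S-2*U = γ by rw [hS, hU]; ring,
    show 3*S-U = β/2+γ by rw [hS, hU]; ring, show 3*S+U = γ/2+β by rw [hS, hU]; ring] at hid
  have h0 : Real.sin S * Real.sin (3*U) + Real.sin (5*S) * Real.sin U = 0 := by
    rw [← hid]; linarith
  have hS4 : S < π/4 := by rw [hS]; linarith
  rcases lt_trichotomy U 0 with hU0 | hU0 | hU0
  · exfalso
    have := pos_aux hS4 (neg_pos.mpr hU0) (by rw [hS, hU]; linarith)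
    rw [show (3:ℝ) * -U = -(3*U) by ring, Real.sin_neg, Real.sin_neg] at this
    linarith
  · rw [hU] at hU0; linarith
  · exfalso
    have := pos_aux hS4 hU0 (by rw [hS, hU]; linarith)
    linarith

private lemma sin_law_vec {V : Type*} [NormedAddCommGroup V] [InnerProductSpace ℝ V] (u v : V) :
    Real.sin (InnerProductGeometry.angle u v) * (‖u‖ * ‖v‖)
      = Real.sin (InnerProductGeometry.angle (-u) (v - u)) * (‖u‖ * ‖v - u‖) := by
  have h2 := InnerProductGeometry.sin_angle_mul_norm_mul_norm (-u) (v - u)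
  rw [norm_neg] at h2
  rw [InnerProductGeometry.sin_angle_mul_norm_mul_norm, h2]
  congr 1
  simp only [inner_neg_neg, inner_neg_left, inner_neg_right, inner_sub_left, inner_sub_right,
    real_inner_comm v u]
  ring

/-- Law of sines, point form. -/
private lemma sin_law (p q r : EuclideanSpace ℝ (Fin 2)) :
    Real.sin (∠ q p r) * (dist p q * dist p r) = Real.sin (∠ p q r) * (dist q p * dist q r) := by
  unfold EuclideanGeometry.angle
  simp only [vsub_eq_sub]
  rw [dist_eq_norm p q, dist_eq_norm p r, dist_eq_norm q p, dist_eq_norm q r,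
    norm_sub_rev p q, norm_sub_rev p r, norm_sub_rev q r,
    show p - q = -(q - p) by abel, show r - q = (r - p) - (q - p) by abel]
  exact sin_law_vec (q - p) (r - p)

/-- If `x` and `y` lie on the same ray from `p`, angles from `z` at `p` agree. -/
private lemma angle_transfer {p x y : EuclideanSpace ℝ (Fin 2)} (z : EuclideanSpace ℝ (Fin 2))
    (h : ∠ x p y = 0) : ∠ z p x = ∠ z p y := by
  unfold EuclideanGeometry.angle at h ⊢
  obtain ⟨hx0, r, hr, hy⟩ := InnerProductGeometry.angle_eq_zero_iff.mp h
  rw [hy, InnerProductGeometry.angle_smul_right_of_pos _ _ hr]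

end SteinerLehmusAux

/-- Steiner–Lehmus: a triangle with two congruent interior angle bisectors is isosceles. -/
theorem steiner_lehmus
    (A B C D E : EuclideanSpace ℝ (Fin 2))
    (hABC : ¬ Collinear ℝ ({A, B, C} : Set (EuclideanSpace ℝ (Fin 2))))
    (hD : D ∈ openSegment ℝ A C) (hBD : ∠ A B D = ∠ C B D)
    (hE : E ∈ openSegment ℝ A B) (hCE : ∠ A C E = ∠ B C E)
    (hcong : dist B D = dist C E) :
    dist A B = dist A C := by
  have hpi := Real.pi_pos
  have hAB : A ≠ B := ne₁₂_of_not_collinear hABC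
  have hAC : A ≠ C := ne₁₃_of_not_collinear hABC
  have nBAC : ¬ Collinear ℝ ({B, A, C} : Set (EuclideanSpace ℝ (Fin 2))) := by
    rwa [Set.insert_comm]
  have nBCA : ¬ Collinear ℝ ({B, C, A} : Set (EuclideanSpace ℝ (Fin 2))) := by
    rw [Set.pair_comm C A, Set.insert_comm B A]; exact hABC
  -- strict betweenness
  have sbtwD : Sbtw ℝ A D C := by
    refine ⟨mem_segment_iff_wbtw.mp (openSegment_subset_segment ℝ A C hD), ?_, ?_⟩
    · rintro rfl; exact hAC (left_mem_openSegment_iff.mp hD)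
    · rintro rfl; exact hAC (right_mem_openSegment_iff.mp hD)
  have sbtwE : Sbtw ℝ A E B := by
    refine ⟨mem_segment_iff_wbtw.mp (openSegment_subset_segment ℝ A B hE), ?_, ?_⟩
    · rintro rfl; exact hAB (left_mem_openSegment_iff.mp hE)
    · rintro rfl; exact hAB (right_mem_openSegment_iff.mp hE)
  have hDB : B ≠ D := by rintro rfl; exact hABC sbtwD.wbtw.collinear
  have hEC : C ≠ E := by
    rintro rfl
    have h1 := sbtwE.wbtw.collinear
    rw [Set.pair_comm C B] at h1
    exact hABC h1
  -- the three angles of the triangle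
  have c4 : ∠ C A B = ∠ B A C := angle_comm _ _ _
  have sABC := angle_add_angle_add_angle_eq_pi (p₁ := A) (p₂ := B) C hAB.symm
  have hsum : ∠ B A C + ∠ A B C + ∠ B C A = Real.pi := by linarith [sABC, c4]
  have hα0 : 0 < ∠ B A C := angle_pos_of_not_collinear nBAC
  have hβ0 : 0 < ∠ A B C := angle_pos_of_not_collinear hABC
  have hγ0 : 0 < ∠ B C A := angle_pos_of_not_collinear nBCA
  have hsinα : 0 < Real.sin (∠ B A C) := sin_pos_of_not_collinear nBAC
  -- bisector from B: half-angle facts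
  have pairD := angle_add_angle_eq_pi_of_angle_eq_pi B sbtwD.angle₁₂₃_eq_pi
  have s1 := angle_add_angle_add_angle_eq_pi (p₁ := D) (p₂ := A) B sbtwD.left_ne
  have s2 := angle_add_angle_add_angle_eq_pi (p₁ := D) (p₂ := C) B sbtwD.right_ne
  have tA : ∠ B A D = ∠ B A C := angle_transfer B sbtwD.angle₂₁₃_eq_zero
  have tC : ∠ B C D = ∠ B C A := angle_transfer B sbtwD.symm.angle₂₁₃_eq_zero
  have cDA : ∠ D A B = ∠ B A D := angle_comm _ _ _
  have cDC : ∠ D C B = ∠ B C D := angle_comm _ _ _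
  have hBDA : ∠ B D A = Real.pi - (∠ B A C + ∠ A B C / 2) := by
    linarith [s1, s2, pairD, hsum, cDA, tA, cDC, tC, hBD]
  -- law of sines in triangle A B D
  have eqB : Real.sin (∠ B A C) * dist A B = Real.sin (∠ B A C + ∠ A B C / 2) * dist B D := by
    have hsl := sin_law A D B
    have hAngle : ∠ D A B = ∠ B A C := by rw [cDA, tA]
    have hAngle2 : Real.sin (∠ A D B) = Real.sin (∠ B A C + ∠ A B C / 2) := by
      rw [angle_comm A D B, hBDA, Real.sin_pi_sub]
    rw [hAngle, hAngle2, dist_comm D A, dist_comm D B] at hsl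
    exact mul_right_cancel₀ (dist_ne_zero.mpr sbtwD.left_ne) (by linear_combination hsl)
  -- bisector from C: half-angle facts
  have pairE := angle_add_angle_eq_pi_of_angle_eq_pi C sbtwE.angle₁₂₃_eq_pi
  have s1' := angle_add_angle_add_angle_eq_pi (p₁ := E) (p₂ := A) C sbtwE.left_ne
  have s2' := angle_add_angle_add_angle_eq_pi (p₁ := E) (p₂ := B) C sbtwE.right_ne
  have tA' : ∠ C A E = ∠ C A B := angle_transfer C sbtwE.angle₂₁₃_eq_zero
  have tB' : ∠ C B E = ∠ C B A := angle_transfer C sbtwE.symm.angle₂₁₃_eq_zero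
  have cEA : ∠ E A C = ∠ C A E := angle_comm _ _ _
  have cEB : ∠ E B C = ∠ C B E := angle_comm _ _ _
  have cBA : ∠ C B A = ∠ A B C := angle_comm _ _ _
  have hCEA : ∠ C E A = Real.pi - (∠ B A C + ∠ B C A / 2) := by
    linarith [s1', s2', pairE, hsum, cEA, tA', c4, cEB, tB', cBA, hCE]
  -- law of sines in triangle A E C
  have eqE : Real.sin (∠ B A C) * dist A C = Real.sin (∠ B A C + ∠ B C A / 2) * dist C E := by
    have hsl := sin_law A E C
    have hAngle : ∠ E A C = ∠ B A C := by rw [cEA, tA', c4]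
    have hAngle2 : Real.sin (∠ A E C) = Real.sin (∠ B A C + ∠ B C A / 2) := by
      rw [angle_comm A E C, hCEA, Real.sin_pi_sub]
    rw [hAngle, hAngle2, dist_comm E A, dist_comm E C] at hsl
    exact mul_right_cancel₀ (dist_ne_zero.mpr sbtwE.left_ne) (by linear_combination hsl)
  -- law of sines in triangle A B C
  have eq_b : Real.sin (∠ A B C) * dist B C = Real.sin (∠ B A C) * dist A C := by
    have hb := sin_law B A C
    rw [dist_comm B A] at hb
    exact mul_right_cancel₀ (dist_ne_zero.mpr hAB) (by linear_combination hb)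
  have eq_c : Real.sin (∠ B C A) * dist B C = Real.sin (∠ B A C) * dist A B := by
    have hc := sin_law C A B
    have h1 : ∠ A C B = ∠ B C A := angle_comm _ _ _
    rw [h1, c4, dist_comm C A, dist_comm C B] at hc
    exact mul_right_cancel₀ (dist_ne_zero.mpr hAC) (by linear_combination hc)
  -- combine
  have hE1 : dist A B * Real.sin (∠ B A C + ∠ B C A / 2)
      = dist A C * Real.sin (∠ B A C + ∠ A B C / 2) := by
    apply mul_left_cancel₀ (ne_of_gt hsinα)
    linear_combination Real.sin (∠ B A C + ∠ B C A / 2) * eqB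
      - Real.sin (∠ B A C + ∠ A B C / 2) * eqE
      + Real.sin (∠ B A C + ∠ A B C / 2) * Real.sin (∠ B A C + ∠ B C A / 2) * hcong
  have hBCne : dist B C ≠ 0 := dist_ne_zero.mpr (ne₂₃_of_not_collinear hABC)
  have P : Real.sin (∠ B C A) * Real.sin (∠ B A C + ∠ B C A / 2)
      = Real.sin (∠ A B C) * Real.sin (∠ B A C + ∠ A B C / 2) := by
    apply mul_left_cancel₀ hBCne
    linear_combination Real.sin (∠ B A C + ∠ B C A / 2) * eq_c
      - Real.sin (∠ B A C + ∠ A B C / 2) * eq_b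
      + Real.sin (∠ B A C) * hE1
  have e1 : ∠ B A C + ∠ B C A / 2 = Real.pi - (∠ B C A / 2 + ∠ A B C) := by linarith
  have e2 : ∠ B A C + ∠ A B C / 2 = Real.pi - (∠ A B C / 2 + ∠ B C A) := by linarith
  rw [e1, Real.sin_pi_sub, e2, Real.sin_pi_sub] at P
  have hβγ : ∠ A B C = ∠ B C A := key_trig hβ0 hγ0 (by linarith) P.symm
  have hfin : ∠ A B C = ∠ A C B := by rw [angle_comm A C B]; exact hβγ
  exact dist_eq_of_angle_eq_angle_of_angle_ne_pi hfin (angle_ne_pi_of_not_collinear nBAC)
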